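/- In dimension 2, elementary differentials evaluated on at most two distinct functions already separate rooted trees: let n ≥ 1 and τ_1, τ_2 ∈ RT(n), and suppose that for every map x : [n] → {1,2} and all f, g ∈ C_2, one has F(τ_1)(h^{x(1)},…,h^{x(n)}) = F(τ_2)(h^{x(1)},…,h^{x(n)}), where h^1 = f and h^2 = g. Then τ_1 = τ_2. (This is the concrete content of the fact that for d ≠ 1, RT is the only 2-weak combinatorial description of W_d compatible with RT.) -/

import Mathlib

open Finset

/-- The type of smooth maps from `ℝ^d` to `ℝ^d` (i.e. `C_d = C^∞(ℝ^d, ℝ^d)`). -/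
def SmoothMapD (d : ℕ) : Type :=
  {f : (Fin d → ℝ) → (Fin d → ℝ) // ∀ k : ℕ, ContDiff ℝ k f}

/-- A rooted tree on a finite vertex set `V`: a set `E` of (parent, child) edges together with a
root, such that every non-root vertex has a unique parent, the root has no parent, and every
vertex reaches the root by iteratively passing to its parent. -/
structure RTree (V : Type) [Fintype V] [DecidableEq V] where
  E : Finset (V × V)
  root : V
  parent_unique : ∀ v : V, v ≠ root → ∃! u : V, (u, v) ∈ E
  root_no_parent : ∀ u : V, (u, root) ∉ E
  reaches_root : ∀ v : V, Relation.ReflTransGen (fun a b : V => (b, a) ∈ E) v root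

/-- The children of a vertex `v` of a rooted tree: `C_v = {w | (v, w) ∈ E}`. -/
def RTree.children {V : Type} [Fintype V] [DecidableEq V] (τ : RTree V) (v : V) :
    Finset V :=
  Finset.univ.filter (fun w => (v, w) ∈ τ.E)

/-- Partial derivative `∂_i` of a scalar function on `ℝ^d`. -/
noncomputable def pd {d : ℕ} (i : Fin d) (g : (Fin d → ℝ) → ℝ) : (Fin d → ℝ) → ℝ :=
  fun x => fderiv ℝ g x (Pi.single i 1)

/-- Iterated partial derivatives along a list of directions. -/
noncomputable def pdList {d : ℕ} (l : List (Fin d)) (g : (Fin d → ℝ) → ℝ) : (Fin d → ℝ) → ℝ :=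
  l.foldr pd g

/-- The elementary differential of a rooted tree, in closed form: the `j`-th component of
`F(τ)((f^v)_v)(x)` is the sum over all choices of an index `idx v ∈ [d]` for each vertex `v`,
subject to `idx root = j`, of the product over all vertices `v` of
`∂_{idx c₁} ⋯ ∂_{idx c_k} (f^v)_{idx v} (x)` where `c₁, …, c_k` are the children of `v`.
For smooth inputs this agrees with the usual recursive definition. -/
noncomputable def elemDiff {V : Type} [Fintype V] [DecidableEq V] {d : ℕ} (τ : RTree V)
    (f : V → ((Fin d → ℝ) → (Fin d → ℝ))) : (Fin d → ℝ) → (Fin d → ℝ) :=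
  fun x j =>
    ∑ idx : V → Fin d,
      if idx τ.root = j then
        ∏ v : V, pdList ((τ.children v).toList.map idx) (fun y => f v y (idx v)) x
      else 0

/-- The elementary differential `F(τ)` evaluated on smooth maps. -/
noncomputable def Fel (d : ℕ) {V : Type} [Fintype V] [DecidableEq V] (τ : RTree V)
    (f : V → SmoothMapD d) : (Fin d → ℝ) → (Fin d → ℝ) :=
  elemDiff τ (fun v => (f v).1)

/-- exponential of a linear functional on ℝ² -/
noncomputable def expc (c : Fin 2 → ℝ) : (Fin 2 → ℝ) → ℝ :=
  fun y => Real.exp (c 0 * y 0 + c 1 * y 1)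

noncomputable def Lc (c : Fin 2 → ℝ) : (Fin 2 → ℝ) →L[ℝ] ℝ :=
  c 0 • (ContinuousLinearMap.proj 0 : (Fin 2 → ℝ) →L[ℝ] ℝ)
    + c 1 • (ContinuousLinearMap.proj 1 : (Fin 2 → ℝ) →L[ℝ] ℝ)

lemma Lc_apply (c y : Fin 2 → ℝ) : Lc c y = c 0 * y 0 + c 1 * y 1 := by
  simp [Lc]

lemma Lc_single (c : Fin 2 → ℝ) (i : Fin 2) : Lc c (Pi.single i 1) = c i := by
  fin_cases i <;> simp [Lc_apply, Pi.single_apply]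

lemma hasFDerivAt_expc (c : Fin 2 → ℝ) (y : Fin 2 → ℝ) :
    HasFDerivAt (expc c) (expc c y • Lc c) y := by
  have h1 : HasFDerivAt (fun y : Fin 2 → ℝ => c 0 * y 0 + c 1 * y 1) (Lc c) y := by
    convert (Lc c).hasFDerivAt (x := y) using 1
    funext z; exact (Lc_apply c z).symm
  exact h1.exp

lemma pd_expc (c : Fin 2 → ℝ) (r : ℝ) (i : Fin 2) :
    pd i (fun y => r * expc c y) = fun y => (r * c i) * expc c y := by
  funext y
  have h : HasFDerivAt (fun y => r * expc c y) (r • (expc c y • Lc c)) y :=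
    (hasFDerivAt_expc c y).const_mul r
  simp only [pd, h.fderiv]
  simp [Lc_single]; ring

lemma pdList_expc (c : Fin 2 → ℝ) (l : List (Fin 2)) (r : ℝ) :
    pdList l (fun y => r * expc c y) = fun y => (r * (l.map c).prod) * expc c y := by
  induction l with
  | nil => simp [pdList]
  | cons i l ih =>
    have : pdList (i :: l) (fun y => r * expc c y) = pd i (pdList l (fun y => r * expc c y)) := rfl
    rw [this, ih, pd_expc]
    funext y; ring_nf
    simp [List.prod_cons]; ring

lemma pd_zero (i : Fin 2) : pd i (fun _ : Fin 2 → ℝ => (0:ℝ)) = fun _ => 0 := by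
  funext y; simp [pd, fderiv_const]

lemma pdList_zero (l : List (Fin 2)) : pdList l (fun _ : Fin 2 → ℝ => (0:ℝ)) = fun _ => 0 := by
  induction l with
  | nil => rfl
  | cons i l ih =>
    have : pdList (i :: l) (fun _ : Fin 2 → ℝ => (0:ℝ))
        = pd i (pdList l (fun _ => 0)) := rfl
    rw [this, ih, pd_zero]
lemma contDiff_expc (c : Fin 2 → ℝ) (k : ℕ) : ContDiff ℝ k (expc c) := by
  apply Real.contDiff_exp.comp
  exact (contDiff_const.mul ((ContinuousLinearMap.proj 0 : (Fin 2 → ℝ) →L[ℝ] ℝ).contDiff)).add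
    (contDiff_const.mul ((ContinuousLinearMap.proj 1 : (Fin 2 → ℝ) →L[ℝ] ℝ).contDiff))

/-- The smooth map `(exp(y₁ + a y₂), 0)`. -/
noncomputable def Fa (a : ℝ) : SmoothMapD 2 :=
  ⟨fun y k => if k = 0 then expc ![1, a] y else 0, by
    intro k
    rw [contDiff_pi]
    intro i
    by_cases hi : i = 0 <;> simp [hi] <;> first | exact contDiff_expc _ _ | exact contDiff_const⟩

/-- The smooth map `(0, exp(y₁ + b y₂))`. -/
noncomputable def Gb (b : ℝ) : SmoothMapD 2 :=
  ⟨fun y k => if k = 1 then expc ![1, b] y else 0, by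
    intro k
    rw [contDiff_pi]
    intro i
    by_cases hi : i = 1 <;> simp [hi] <;> first | exact contDiff_expc _ _ | exact contDiff_const⟩

lemma expc_zero (c : Fin 2 → ℝ) : expc c 0 = 1 := by simp [expc]
lemma slot_component_eq (a b : ℝ) (xv k : Fin 2) :
    (fun y => ((if xv = 0 then Fa a else Gb b).1) y k) =
      if k = xv then (fun y => (1:ℝ) * expc ![1, if xv = 0 then a else b] y)
        else (fun _ => (0:ℝ)) := by
  rcases (by omega : xv = 0 ∨ xv = 1) with hv | hv <;>
    rcases (by omega : k = 0 ∨ k = 1) with hk | hk <;>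
      simp [hv, hk, Fa, Gb]

lemma Fel_eval (n : ℕ) (τ : RTree (Fin n)) (x : Fin n → Fin 2) (a b : ℝ) (j : Fin 2) :
    Fel 2 τ (fun i => if x i = 0 then Fa a else Gb b) 0 j =
      if x τ.root = j then
        ∏ v : Fin n, ∏ c ∈ τ.children v,
          (if x c = 0 then (1:ℝ) else if x v = 0 then a else b)
      else 0 := by
  rw [Fel, elemDiff]
  rw [Finset.sum_eq_single x]
  · -- the surviving term
    by_cases hr : x τ.root = j
    · rw [if_pos hr, if_pos hr]
      apply Finset.prod_congr rfl
      intro v _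
      rw [slot_component_eq, if_pos rfl, pdList_expc]
      simp only [expc_zero, one_mul, mul_one, List.map_map, Finset.prod_map_toList]
      apply Finset.prod_congr rfl
      intro c _
      rcases (by omega : x c = 0 ∨ x c = 1) with hc | hc <;> simp [Function.comp, hc]
    · rw [if_neg hr, if_neg hr]
  · -- all other idx give 0
    intro idx _ hidx
    have ⟨v, hv⟩ : ∃ v, idx v ≠ x v := by
      by_contra hcon
      push_neg at hcon
      exact hidx (funext hcon)
    have hcomp : (fun y => ((if x v = 0 then Fa a else Gb b).1) y (idx v)) = fun _ => (0:ℝ) := by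
      rw [slot_component_eq, if_neg hv]
    split
    · refine Finset.prod_eq_zero (Finset.mem_univ v) ?_
      rw [hcomp, pdList_zero]
    · rfl
  · intro hx
    exact absurd (Finset.mem_univ x) hx
lemma RTree.no_two_cycle {V : Type} [Fintype V] [DecidableEq V] (τ : RTree V) {a c : V}
    (h1 : (c, a) ∈ τ.E) (h2 : (a, c) ∈ τ.E) : False := by
  have ha : a ≠ τ.root := fun h => τ.root_no_parent c (h ▸ h1)
  have hc : c ≠ τ.root := fun h => τ.root_no_parent a (h ▸ h2)
  have key : ∀ z, Relation.ReflTransGen (fun p q : V => (q, p) ∈ τ.E) z τ.root →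
      z ≠ a ∧ z ≠ c := by
    intro z hz
    induction hz using Relation.ReflTransGen.head_induction_on with
    | refl => exact ⟨Ne.symm ha, Ne.symm hc⟩
    | head h' hch ih =>
      rename_i z w
      constructor
      · rintro rfl
        obtain ⟨p, hp, hup⟩ := τ.parent_unique z ha
        exact ih.2 ((hup w h').trans (hup c h1).symm)
      · rintro rfl
        obtain ⟨p, hp, hup⟩ := τ.parent_unique z hc
        exact ih.1 ((hup w h').trans (hup a h2).symm)
  exact (key a (τ.reaches_root a)).1 rfl

lemma RTree.E_subset {n : ℕ} (τ₁ τ₂ : RTree (Fin n)) (hroot : τ₁.root = τ₂.root)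
    (hadj : ∀ u v : Fin n,
      ((u, v) ∈ τ₁.E ∨ (v, u) ∈ τ₁.E) ↔ ((u, v) ∈ τ₂.E ∨ (v, u) ∈ τ₂.E)) :
    τ₁.E ⊆ τ₂.E := by
  intro e he
  obtain ⟨u, v⟩ := e
  have H : ∀ v : Fin n, Relation.ReflTransGen (fun a b : Fin n => (b, a) ∈ τ₁.E) v τ₁.root →
      ∀ u : Fin n, (u, v) ∈ τ₁.E → (u, v) ∈ τ₂.E := by
    intro v hv
    induction hv using Relation.ReflTransGen.head_induction_on with
    | refl => intro u hu; exact absurd hu (τ₁.root_no_parent u)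
    | head h' hch ih =>
      rename_i z w
      intro u hu
      have hz : z ≠ τ₁.root := fun h => τ₁.root_no_parent w (h ▸ h')
      obtain ⟨p, hp, hup⟩ := τ₁.parent_unique z hz
      have huw : u = w := (hup u hu).trans (hup w h').symm
      subst huw
      rcases (hadj u z).1 (Or.inl hu) with h2 | h2
      · exact h2
      · exfalso
        by_cases hur : u = τ₁.root
        · exact τ₂.root_no_parent z (by rwa [hur, hroot] at h2)
        · obtain ⟨q, hq, _⟩ := τ₁.parent_unique u hur
          have hq2 : (q, u) ∈ τ₂.E := ih q hq
          have hur2 : u ≠ τ₂.root := by rw [← hroot]; exact hur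
          obtain ⟨p2, hp2, hup2⟩ := τ₂.parent_unique u hur2
          have hzq : z = q := (hup2 z h2).trans (hup2 q hq2).symm
          exact τ₁.no_two_cycle hu (hzq ▸ hq)
  exact H v (τ₁.reaches_root v) u he
lemma prod_ite_pow {α : Type*} (p : α → Prop) [DecidablePred p] (r : ℝ) (s : Finset α) :
    (∏ z ∈ s, if p z then r else 1) = r ^ (s.filter p).card := by
  rw [← Finset.prod_filter, Finset.prod_const]

lemma prod_count {n : ℕ} (τ : RTree (Fin n)) (x : Fin n → Fin 2) :
    (∏ v : Fin n, ∏ c ∈ τ.children v,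
        (if x c = 0 then (1:ℝ) else if x v = 0 then 1 else 2)) =
      2 ^ (τ.E.filter (fun e => x e.1 ≠ 0 ∧ x e.2 ≠ 0)).card := by
  have step1 : (∏ v : Fin n, ∏ c ∈ τ.children v,
        (if x c = 0 then (1:ℝ) else if x v = 0 then 1 else 2)) =
      ∏ p : Fin n × Fin n, (if p ∈ τ.E ∧ (x p.1 ≠ 0 ∧ x p.2 ≠ 0) then (2:ℝ) else 1) := by
    rw [Fintype.prod_prod_type]
    refine Finset.prod_congr rfl fun v _ => ?_
    rw [RTree.children, Finset.prod_filter]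
    refine Finset.prod_congr rfl fun c _ => ?_
    by_cases h1 : (v, c) ∈ τ.E <;> by_cases h2 : x c = 0 <;> by_cases h3 : x v = 0 <;>
      simp [h1, h2, h3]
  rw [step1, prod_ite_pow]
  congr 1
  congr 1
  ext p
  simp [and_comm]
lemma RTree.eq_of {V : Type} [Fintype V] [DecidableEq V] {τ₁ τ₂ : RTree V}
    (hE : τ₁.E = τ₂.E) (hr : τ₁.root = τ₂.root) : τ₁ = τ₂ := by
  obtain ⟨E1, r1, p1, q1, s1⟩ := τ₁
  obtain ⟨E2, r2, p2, q2, s2⟩ := τ₂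
  dsimp at hE hr
  subst hE; subst hr
  rfl

theorem two_functions_separate_trees_aux (n : ℕ) (hn : 1 ≤ n) (τ₁ τ₂ : RTree (Fin n))
    (h : ∀ (x : Fin n → Fin 2) (f g : SmoothMapD 2),
      Fel 2 τ₁ (fun i => if x i = 0 then f else g) =
      Fel 2 τ₂ (fun i => if x i = 0 then f else g)) :
    τ₁ = τ₂ := by
  have key : ∀ (x : Fin n → Fin 2) (a b : ℝ) (j : Fin 2),
      (if x τ₁.root = j then
          ∏ v : Fin n, ∏ c ∈ τ₁.children v,
            (if x c = 0 then (1:ℝ) else if x v = 0 then a else b)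
        else 0) =
      (if x τ₂.root = j then
          ∏ v : Fin n, ∏ c ∈ τ₂.children v,
            (if x c = 0 then (1:ℝ) else if x v = 0 then a else b)
        else 0) := by
    intro x a b j
    have := congrFun (congrFun (h x (Fa a) (Gb b)) 0) j
    rwa [Fel_eval, Fel_eval] at this
  have hroot : τ₁.root = τ₂.root := by
    by_contra hne
    have hk := key (fun w => if w = τ₁.root then 0 else 1) 1 1 0
    simp only [ite_self, Finset.prod_const_one, if_pos rfl] at hk
    simp [Ne.symm hne] at hk
  have hadj : ∀ u v : Fin n,
      ((u, v) ∈ τ₁.E ∨ (v, u) ∈ τ₁.E) ↔ ((u, v) ∈ τ₂.E ∨ (v, u) ∈ τ₂.E) := by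
    intro u v
    set x : Fin n → Fin 2 := fun w => if w = u ∨ w = v then 1 else 0 with hx
    have hk := key x 1 2 (x τ₁.root)
    rw [if_pos rfl, if_pos (by rw [← hroot]), prod_count, prod_count] at hk
    have hcard := (pow_right_strictMono₀ (one_lt_two)).injective hk
    have hchar : ∀ τ : RTree (Fin n),
        ((τ.E.filter (fun e => x e.1 ≠ 0 ∧ x e.2 ≠ 0)).card ≠ 0 ↔
          ((u, v) ∈ τ.E ∨ (v, u) ∈ τ.E)) := by
      intro τ
      rw [Ne, Finset.card_eq_zero, ← Ne, ← Finset.nonempty_iff_ne_empty]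
      constructor
      · rintro ⟨e, he⟩
        obtain ⟨e1, e2⟩ := e
        rw [Finset.mem_filter] at he
        obtain ⟨heE, h1, h2⟩ := he
        have m1 : e1 = u ∨ e1 = v := by
          by_contra hcc; push_neg at hcc; exact h1 (by simp [hx, hcc.1, hcc.2])
        have m2 : e2 = u ∨ e2 = v := by
          by_contra hcc; push_neg at hcc; exact h2 (by simp [hx, hcc.1, hcc.2])
        rcases m1 with rfl | rfl <;> rcases m2 with rfl | rfl
        · exact absurd heE (fun hh => τ.no_two_cycle hh hh)
        · exact Or.inl heE
        · exact Or.inr heE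
        · exact absurd heE (fun hh => τ.no_two_cycle hh hh)
      · rintro (he | he)
        · exact ⟨(u, v), Finset.mem_filter.mpr ⟨he, by simp [hx], by simp [hx]⟩⟩
        · exact ⟨(v, u), Finset.mem_filter.mpr ⟨he, by simp [hx], by simp [hx]⟩⟩
    exact ((hchar τ₁).symm.trans (by rw [hcard]; exact hchar τ₂))
  exact RTree.eq_of
    (Finset.Subset.antisymm (RTree.E_subset τ₁ τ₂ hroot hadj)
      (RTree.E_subset τ₂ τ₁ hroot.symm fun u v => (hadj u v).symm))
    hroot

/-- Theorem 6.1, concrete form: in dimension `2`, elementary differentials evaluated on at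
most two distinct smooth functions already separate rooted trees. -/
theorem two_functions_separate_trees (n : ℕ) (hn : 1 ≤ n) (τ₁ τ₂ : RTree (Fin n))
    (h : ∀ (x : Fin n → Fin 2) (f g : SmoothMapD 2),
      Fel 2 τ₁ (fun i => if x i = 0 then f else g) =
      Fel 2 τ₂ (fun i => if x i = 0 then f else g)) :
    τ₁ = τ₂ :=
  two_functions_separate_trees_aux n hn τ₁ τ₂ h
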